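/- Let γ be a connected graph with half-edges whose vertex set is partitioned into three pairwise disjoint subsets, Ver = W ⊔ A ⊔ S, with W ≠ ∅. Then |E(γ)| − |E_γ(S)| − |π₀(γ,S)| ≥ |A|. -/

import Mathlib

/-- The set of edges of a graph with half-edges: unordered pairs `{f, ϑ f}`. -/
def edgeSet {F : Type*} (ϑ : F → F) : Set (Set F) :=
  {e | ∃ f, e = {f, ϑ f}}

/-- The edges both of whose flags have ε-image in `S`. -/
def edgesIn {V F : Type*} (ε : F → V) (ϑ : F → F) (S : Set V) : Set (Set F) :=
  {e | ∃ f, e = {f, ϑ f} ∧ ε f ∈ S ∧ ε (ϑ f) ∈ S}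

/-- One-step adjacency in the graph: `v` and `v'` are the two endpoints of an edge. -/
def Step {V F : Type*} (ε : F → V) (ϑ : F → F) (v v' : V) : Prop :=
  ∃ f, ε f = v ∧ ε (ϑ f) = v'

/-- The graph is connected: any two distinct vertices are joined by a chain of edges. -/
def IsConnectedGraph {V F : Type*} (ε : F → V) (ϑ : F → F) : Prop :=
  ∀ v v' : V, v ≠ v' → Relation.ReflTransGen (Step ε ϑ) v v'

/-- One-step adjacency within the induced subgraph on the vertex subset `S`. -/
def StepIn {V F : Type*} (ε : F → V) (ϑ : F → F) (S : Set V) (v v' : V) : Prop :=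
  v ∈ S ∧ v' ∈ S ∧ ∃ f, ε f = v ∧ ε (ϑ f) = v'

/-- The connected component of `v` in the induced subgraph on `S`. -/
def component {V F : Type*} (ε : F → V) (ϑ : F → F) (S : Set V) (v : V) : Set V :=
  {w | Relation.ReflTransGen (StepIn ε ϑ S) v w}

/-- `π₀(γ,S)`: the set of connected components of the induced subgraph on `S`. -/
def pi0 {V F : Type*} (ε : F → V) (ϑ : F → F) (S : Set V) : Set (Set V) :=
  {C | ∃ v ∈ S, C = component ε ϑ S v}

/-- The crossing edges of a subset `C` of vertices: edges with exactly one flag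
having ε-image in `C`. -/
def crossingEdges {V F : Type*} (ε : F → V) (ϑ : F → F) (C : Set V) : Set (Set F) :=
  {e | ∃ f, e = {f, ϑ f} ∧ ε f ∉ C ∧ ε (ϑ f) ∈ C}

/-- One-step adjacency in the graph obtained by deleting the two flags `f₀`, `ϑ f₀`. -/
def StepAvoid {V F : Type*} (ε : F → V) (ϑ : F → F) (f₀ : F) (v v' : V) : Prop :=
  ∃ g, g ≠ f₀ ∧ g ≠ ϑ f₀ ∧ ε g = v ∧ ε (ϑ g) = v'

/-- The flag `f₀` disconnects `C` from the rest of the graph: after deleting the flags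
`f₀` and `ϑ f₀`, there is no chain of edges from a vertex of `C` to a vertex outside `C`. -/
def Disconnects {V F : Type*} (ε : F → V) (ϑ : F → F) (C : Set V) (f₀ : F) : Prop :=
  ∀ v ∈ C, ∀ v' ∉ C, ¬ Relation.ReflTransGen (StepAvoid ε ϑ f₀) v v'

/-- `F°_γ(S)`: the flags `f` with `ε f ∉ S` that disconnect from the rest of the graph
the connected component of the induced subgraph on `S` containing `ε (ϑ f)`. -/
def Fcirc {V F : Type*} (ε : F → V) (ϑ : F → F) (S : Set V) : Set F :=
  {f | ε f ∉ S ∧ ε (ϑ f) ∈ S ∧ Disconnects ε ϑ (component ε ϑ S (ε (ϑ f))) f}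

/-- `F†_γ(S)`: the flags of `F°_γ(S)` whose associated component carries no marked label. -/
def Fdagger {V F L : Type*} (ε : F → V) (ϑ : F → F) (εS : L → V) (S : Set V) : Set F :=
  {f | f ∈ Fcirc ε ϑ S ∧ ∀ s : L, εS s ∉ component ε ϑ S (ε (ϑ f))}

section Aux

variable {V F : Type*} (ε : F → V) (ϑ : F → F)

lemma stepIn_symm {S : Set V} (hinv : Function.Involutive ϑ) :
    Symmetric (StepIn ε ϑ S) := by
  rintro v v' ⟨hv, hv', f, hf, hf'⟩
  exact ⟨hv', hv, ϑ f, hf', by rwa [hinv f]⟩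

lemma comp_eq_iff {S : Set V} (hinv : Function.Involutive ϑ) (v v' : V) :
    component ε ϑ S v = component ε ϑ S v' ↔
      Relation.ReflTransGen (StepIn ε ϑ S) v v' := by
  have hsymm : Symmetric (Relation.ReflTransGen (StepIn ε ϑ S)) := by
    intro a b h
    induction h with
    | refl => exact Relation.ReflTransGen.refl
    | tail _ hs ih => exact Relation.ReflTransGen.head (stepIn_symm ε ϑ hinv hs) ih
  constructor
  · intro h
    have : v' ∈ component ε ϑ S v' := Relation.ReflTransGen.refl
    rw [← h] at this; exact this
  · intro h
    ext w
    constructor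
    · intro hw; exact Relation.ReflTransGen.trans (hsymm h) hw
    · intro hw; exact Relation.ReflTransGen.trans h hw

lemma comp_of_not_mem {S : Set V} {v : V} (hv : v ∉ S) :
    component ε ϑ S v = {v} := by
  ext w
  simp only [component, Set.mem_setOf_eq, Set.mem_singleton_iff]
  constructor
  · intro h
    rcases Relation.ReflTransGen.cases_head h with h | ⟨u, ⟨hvS, _⟩, _⟩
    · exact h.symm
    · exact absurd hvS hv
  · rintro rfl; exact Relation.ReflTransGen.refl

end Aux

/-- For a connected graph with half-edges whose vertex set is partitioned
as `Ver = W ⊔ A ⊔ S` with `W ≠ ∅`, one has `|E(γ)| − |E_γ(S)| − |π₀(γ,S)| ≥ |A|`. -/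
theorem stmt6 {V F : Type*} [Fintype V] [Fintype F]
    (ε : F → V) (ϑ : F → F) (hinv : Function.Involutive ϑ) (hfpf : ∀ f, ϑ f ≠ f)
    (hconn : IsConnectedGraph ε ϑ)
    (W A S : Set V)
    (hWA : Disjoint W A) (hWS : Disjoint W S) (hAS : Disjoint A S)
    (hunion : W ∪ A ∪ S = Set.univ) (hW : W.Nonempty) :
    (A.ncard : ℤ) ≤
      ((edgeSet ϑ).ncard : ℤ) - (edgesIn ε ϑ S).ncard - (pi0 ε ϑ S).ncard := by
  classical
  obtain ⟨w₀, hw₀⟩ := hW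
  set c : V → Set V := component ε ϑ S with hc
  set sk : Setoid V := Setoid.ker c with hsk
  set Q : Type _ := Quotient sk with hQ
  have : Finite Q := Quotient.finite sk
  set mk : V → Q := fun v => Quotient.mk sk v with hmk
  have mk_eq : ∀ v v' : V, mk v = mk v' ↔ c v = c v' := by
    intro v v'; rw [Quotient.eq]; exact Iff.rfl
  -- basic component facts
  have mem_self : ∀ v, v ∈ c v := fun v => Relation.ReflTransGen.refl
  have compS : ∀ v ∈ S, c v ⊆ S := by
    intro v hv w hw
    rcases Relation.ReflTransGen.cases_tail hw with h | ⟨u, _, _, hu', _⟩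
    · exact h ▸ hv
    · exact hu'
  -- the contracted adjacency
  set R : Q → Q → Prop := fun x y => ∃ f, mk (ε f) = x ∧ mk (ε (ϑ f)) = y with hR
  have hRsymm : Symmetric R := by
    rintro x y ⟨f, hf, hf'⟩
    exact ⟨ϑ f, hf', by rwa [hinv f]⟩
  set G : SimpleGraph Q := ⟨fun x y => x ≠ y ∧ R x y,
    ⟨fun x y h => ⟨h.1.symm, hRsymm h.2⟩⟩, ⟨fun x h => h.1 rfl⟩⟩ with hG
  -- connectivity of G
  have hGpre : G.Preconnected := by
    intro q q'
    obtain ⟨v, rfl⟩ := Quotient.exists_rep q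
    obtain ⟨v', rfl⟩ := Quotient.exists_rep q'
    rw [SimpleGraph.reachable_iff_reflTransGen]
    by_cases hvv : v = v'
    · subst hvv; exact Relation.ReflTransGen.refl
    · have := hconn v v' hvv
      have key : ∀ a b : V, Relation.ReflTransGen (Step ε ϑ) a b →
          Relation.ReflTransGen G.Adj (mk a) (mk b) := by
        intro a b hab
        induction hab with
        | refl => exact Relation.ReflTransGen.refl
        | tail _ hstep ih =>
          rename_i x y _
          by_cases hxy : mk x = mk y
          · rwa [← hxy]
          · refine Relation.ReflTransGen.tail ih ⟨hxy, ?_⟩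
            obtain ⟨f, hf, hf'⟩ := hstep
            exact ⟨f, by rw [hf], by rw [hf']⟩
      exact key v v' this
  have : Nonempty Q := ⟨mk w₀⟩
  have hGconn : G.Connected := SimpleGraph.Connected.mk hGpre
  set r : Q := mk w₀ with hr
  -- parent function via distance
  have hpar : ∀ x : Q, x ≠ r → ∃ y, G.Adj x y ∧ G.dist r y < G.dist r x := by
    intro x hx
    have hreach : G.Reachable x r := hGpre x r
    have hd : 0 < G.dist r x := hGconn.pos_dist_of_ne (Ne.symm hx)
    obtain ⟨p, hp⟩ := (hGpre r x).exists_walk_length_eq_dist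
    obtain ⟨y, hadj, p', hp'⟩ := SimpleGraph.Walk.exists_eq_cons_of_ne hx p.reverse
    refine ⟨y, hadj, ?_⟩
    have hlen : p'.length + 1 = G.dist r x := by
      have := congrArg SimpleGraph.Walk.length hp'
      rw [SimpleGraph.Walk.length_reverse] at this
      simp [SimpleGraph.Walk.length_cons] at this
      omega
    have : G.dist r y ≤ p'.reverse.length := SimpleGraph.dist_le _
    rw [SimpleGraph.Walk.length_reverse] at this
    omega
  set par : Q → Q := fun x => if h : x ≠ r then (hpar x h).choose else r with hpar'
  have par_adj : ∀ x : Q, x ≠ r → G.Adj x (par x) := by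
    intro x hx; rw [hpar']; simp only [dif_pos hx]; exact (hpar x hx).choose_spec.1
  have par_dist : ∀ x : Q, x ≠ r → G.dist r (par x) < G.dist r x := by
    intro x hx; rw [hpar']; simp only [dif_pos hx]; exact (hpar x hx).choose_spec.2
  -- injection from non-root vertices into G.edgeSet
  set φ : Q → Sym2 Q := fun x => s(x, par x) with hφ
  have hφinj : Set.InjOn φ {x : Q | x ≠ r} := by
    intro x hx y hy hxy
    rw [hφ] at hxy
    simp only at hxy
    rcases Sym2.eq_iff.mp hxy with ⟨h1, _⟩ | ⟨h1, h2⟩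
    · exact h1
    · exfalso
      have d1 := par_dist x hx
      have d2 := par_dist y hy
      rw [h2] at d1
      rw [← h1] at d2
      omega
  have hφsub : φ '' {x : Q | x ≠ r} ⊆ G.edgeSet := by
    rintro e ⟨x, hx, rfl⟩
    exact par_adj x hx
  -- count 1 : nonroot vertices ≤ edges of G
  have count1 : ({x : Q | x ≠ r}).ncard ≤ (G.edgeSet).ncard := by
    rw [← Set.ncard_image_of_injOn hφinj]
    exact Set.ncard_le_ncard hφsub (Set.toFinite _)
  -- map from actual edges to Sym2 Q
  set ψ : Set F → Sym2 Q := fun e =>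
    if h : ∃ f, e = {f, ϑ f} then s(mk (ε h.choose), mk (ε (ϑ h.choose)))
    else s(r, r) with hψ
  -- edges of G are covered by ψ applied to non-S edges
  have flag_eq : ∀ f g : F, ({f, ϑ f} : Set F) = {g, ϑ g} → g = f ∨ g = ϑ f := by
    intro f g h
    have : g ∈ ({g, ϑ g} : Set F) := by simp
    rw [← h] at this
    simpa using this
  have cover : G.edgeSet ⊆ ψ '' (edgeSet ϑ \ edgesIn ε ϑ S) := by
    intro e he
    induction e with
    | _ x y =>
      obtain ⟨hxy, f, hf, hf'⟩ := he
      refine ⟨{f, ϑ f}, ⟨⟨f, rfl⟩, ?_⟩, ?_⟩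
      · rintro ⟨g, hg, hgS, hgS'⟩
        have hcc : c (ε f) = c (ε (ϑ f)) := by
          rcases flag_eq f g hg with h | h
          · rw [h] at hgS hgS'
            exact (comp_eq_iff ε ϑ hinv _ _).mpr
              (Relation.ReflTransGen.single ⟨hgS, hgS', f, rfl, rfl⟩)
          · rw [h] at hgS hgS'
            rw [hinv f] at hgS'
            exact ((comp_eq_iff ε ϑ hinv _ _).mpr
              (Relation.ReflTransGen.single ⟨hgS, hgS', ϑ f, rfl, congrArg ε (hinv f)⟩)).symm
        exact hxy (by rw [← hf, ← hf', mk_eq]; exact hcc)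
      · rw [hψ]
        have hex : ∃ g, ({f, ϑ f} : Set F) = {g, ϑ g} := ⟨f, rfl⟩
        simp only [dif_pos hex]
        rcases flag_eq f hex.choose hex.choose_spec with h | h
        · rw [h, hf, hf']
        · rw [h, hinv f, hf, hf', Sym2.eq_swap]
  have count2 : (G.edgeSet).ncard ≤ (edgeSet ϑ \ edgesIn ε ϑ S).ncard := by
    calc (G.edgeSet).ncard ≤ (ψ '' (edgeSet ϑ \ edgesIn ε ϑ S)).ncard :=
          Set.ncard_le_ncard cover (Set.toFinite _)
      _ ≤ _ := Set.ncard_image_le (Set.toFinite _)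
  -- edgesIn ⊆ edgeSet
  have hsub : edgesIn ε ϑ S ⊆ edgeSet ϑ := by
    rintro e ⟨f, hf, _⟩; exact ⟨f, hf⟩
  have count3 : (edgeSet ϑ \ edgesIn ε ϑ S).ncard + (edgesIn ε ϑ S).ncard
      = (edgeSet ϑ).ncard := by
    rw [← Set.ncard_union_eq (Set.disjoint_sdiff_left) (Set.toFinite _) (Set.toFinite _),
      Set.diff_union_of_subset hsub]
  -- injections of A and pi0 into nonroot vertices
  have hw₀S : w₀ ∉ S := fun h => (hWS.ne_of_mem hw₀ h) rfl
  have comp_not : ∀ a : V, a ∉ S → c a = {a} := fun a ha => comp_of_not_mem ε ϑ ha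
  have compW : c w₀ = {w₀} := comp_of_not_mem ε ϑ hw₀S
  have hAimg : Set.InjOn mk A := by
    intro a ha a' ha' h
    have haS : a ∉ S := fun hs => (hAS.ne_of_mem ha hs) rfl
    have haS' : a' ∉ S := fun hs => (hAS.ne_of_mem ha' hs) rfl
    rw [mk_eq, comp_not a haS, comp_not a' haS'] at h
    exact Set.singleton_eq_singleton_iff.mp h
  set jp : Set V → Q := fun C =>
    if h : ∃ v, v ∈ S ∧ C = c v then mk h.choose else r with hjp
  have jp_spec : ∀ C ∈ pi0 ε ϑ S, ∃ v, v ∈ S ∧ C = c v ∧ jp C = mk v := by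
    rintro C ⟨v, hv, rfl⟩
    have hex : ∃ u, u ∈ S ∧ c v = c u := ⟨v, hv, rfl⟩
    refine ⟨hex.choose, hex.choose_spec.1, hex.choose_spec.2, ?_⟩
    rw [hjp]; exact dif_pos hex
  have hPimg : Set.InjOn jp (pi0 ε ϑ S) := by
    intro C hC C' hC' h
    obtain ⟨v, hv, rfl, hjv⟩ := jp_spec C hC
    obtain ⟨v', hv', rfl, hjv'⟩ := jp_spec C' hC'
    rw [hjv, hjv', mk_eq] at h
    exact h
  have himg_sub : mk '' A ∪ jp '' (pi0 ε ϑ S) ⊆ {x : Q | x ≠ r} := by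
    rintro x (⟨a, ha, rfl⟩ | ⟨C, hC, rfl⟩)
    · intro h
      rw [hr, mk_eq, comp_not a (fun hs => (hAS.ne_of_mem ha hs) rfl), compW] at h
      have : a = w₀ := Set.singleton_eq_singleton_iff.mp h
      exact (hWA.ne_of_mem hw₀ ha) this.symm
    · obtain ⟨v, hv, _, hjv⟩ := jp_spec C hC
      rw [hjv]
      intro h
      rw [hr, mk_eq, compW] at h
      have : v ∈ ({w₀} : Set V) := by rw [← h]; exact mem_self v
      rw [Set.mem_singleton_iff] at this
      exact hw₀S (this ▸ hv)
  have himg_disj : Disjoint (mk '' A) (jp '' (pi0 ε ϑ S)) := by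
    rw [Set.disjoint_left]
    rintro x ⟨a, ha, rfl⟩ ⟨C, hC, hCx⟩
    obtain ⟨v, hv, _, hjv⟩ := jp_spec C hC
    rw [hjv, mk_eq, comp_not a (fun hs => (hAS.ne_of_mem ha hs) rfl)] at hCx
    have : v ∈ ({a} : Set V) := by rw [← hCx]; exact mem_self v
    rw [Set.mem_singleton_iff] at this
    exact (hAS.ne_of_mem ha hv) this.symm
  have count0 : A.ncard + (pi0 ε ϑ S).ncard ≤ ({x : Q | x ≠ r}).ncard := by
    calc A.ncard + (pi0 ε ϑ S).ncard
        = (mk '' A).ncard + (jp '' (pi0 ε ϑ S)).ncard := by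
          rw [Set.ncard_image_of_injOn hAimg, Set.ncard_image_of_injOn hPimg]
      _ = (mk '' A ∪ jp '' (pi0 ε ϑ S)).ncard :=
          (Set.ncard_union_eq himg_disj (Set.toFinite _) (Set.toFinite _)).symm
      _ ≤ _ := Set.ncard_le_ncard himg_sub (Set.toFinite _)
  have final : A.ncard + (pi0 ε ϑ S).ncard + (edgesIn ε ϑ S).ncard ≤ (edgeSet ϑ).ncard := by
    omega
  push_cast
  omega
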